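/- Consider a majority-vote ensemble of G sub-classifiers predicting class ŷ on input x with vote counts o_x : 𝒴 → ℕ satisfying Σ_y o_x(y) = G, where ŷ is the majority class (ties broken by smallest index). Suppose an attacker controls a set of sub-classifiers indexed by a set I ⊆ {0,...,G-1} and can set their votes arbitrarily. Then the ensemble prediction on x can be changed if and only if there exists a class y ≠ ŷ with o_x(ŷ) − c_I(ŷ) < o_x(y) + (|I| − c_I(y)) + [y < ŷ], where c_I(z) is the number of controlled sub-classifiers originally voting z and [y < ŷ] is 1 if y has smaller index than ŷ and 0 otherwise (with the strict inequality interpreted as: the lower bound on ŷ-votes is less than the upper bound on y-votes, or equal with y having smaller index). -/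
import Mathlib

open Finset in
private lemma split_card {G C : ℕ} (I : Finset (Fin G)) (h : Fin G → Fin C) (z : Fin C) :
    (univ.filter (fun g => h g = z)).card
      = (I.filter (fun g => h g = z)).card + (Iᶜ.filter (fun g => h g = z)).card := by
  rw [← card_union_of_disjoint (disjoint_filter_filter disjoint_compl_right),
    ← filter_union, union_compl]

open Finset in
/-- Majority-vote ensemble of `G` sub-classifiers over classes `Fin C` (smallest-index
tie-breaking), attacker controlling the sub-classifiers in `I`: the prediction `yh` on `x`
can be changed iff there is a class `y ≠ yh` with
`o(yh) − c_I(yh) < o(y) + (|I| − c_I(y)) + [y < yh]`. -/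
theorem stmt7 {G C : ℕ} (f : Fin G → Fin C) (yh : Fin C)
    (hmaj : ∀ y : Fin C,
      (univ.filter (fun g => f g = y)).card ≤ (univ.filter (fun g => f g = yh)).card ∧
      ((univ.filter (fun g => f g = y)).card = (univ.filter (fun g => f g = yh)).card →
        yh ≤ y))
    (I : Finset (Fin G)) :
    (∃ f' : Fin G → Fin C, (∀ g ∉ I, f' g = f g) ∧
      ∃ y : Fin C, y ≠ yh ∧
        ((univ.filter (fun g => f' g = yh)).card < (univ.filter (fun g => f' g = y)).card ∨
         ((univ.filter (fun g => f' g = y)).card = (univ.filter (fun g => f' g = yh)).card ∧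
          y < yh))) ↔
    (∃ y : Fin C, y ≠ yh ∧
      (univ.filter (fun g => f g = yh)).card - (I.filter (fun g => f g = yh)).card <
        (univ.filter (fun g => f g = y)).card +
          (I.card - (I.filter (fun g => f g = y)).card) +
          (if y < yh then 1 else 0)) := by
  constructor
  · rintro ⟨f', hf', y, hy, hwin⟩
    refine ⟨y, hy, ?_⟩
    have hout : Iᶜ.filter (fun g => f' g = yh) = Iᶜ.filter (fun g => f g = yh) := by
      apply filter_congr; intro g hg; rw [hf' g (mem_compl.mp hg)]
    have hout2 : Iᶜ.filter (fun g => f' g = y) = Iᶜ.filter (fun g => f g = y) := by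
      apply filter_congr; intro g hg; rw [hf' g (mem_compl.mp hg)]
    have h1 := split_card I f yh
    have h2 := split_card I f y
    have h3 := split_card I f' yh
    have h4 := split_card I f' y
    rw [hout] at h3; rw [hout2] at h4
    have hcy : (I.filter (fun g => f g = y)).card ≤ I.card := card_filter_le _ _
    have hcy' : (I.filter (fun g => f' g = y)).card ≤ I.card := card_filter_le _ _
    rcases hwin with h | ⟨h, hlt⟩
    · split_ifs with hyy <;> omega
    · rw [if_pos hlt]; omega
  · rintro ⟨y, hy, hlt⟩
    refine ⟨fun g => if g ∈ I then y else f g, fun g hg => if_neg hg, y, hy, ?_⟩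
    have hI : I.filter (fun g => (if g ∈ I then y else f g) = yh) = ∅ := by
      rw [filter_eq_empty_iff]; intro g hg
      simp only [if_pos hg]; exact hy
    have hI2 : I.filter (fun g => (if g ∈ I then y else f g) = y) = I := by
      rw [filter_eq_self]; intro g hg; simp [hg]
    have hout : Iᶜ.filter (fun g => (if g ∈ I then y else f g) = yh)
        = Iᶜ.filter (fun g => f g = yh) := by
      apply filter_congr; intro g hg; rw [if_neg (mem_compl.mp hg)]
    have hout2 : Iᶜ.filter (fun g => (if g ∈ I then y else f g) = y)
        = Iᶜ.filter (fun g => f g = y) := by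
      apply filter_congr; intro g hg; rw [if_neg (mem_compl.mp hg)]
    have h1 := split_card I f yh
    have h2 := split_card I f y
    have h3 := split_card I (fun g => if g ∈ I then y else f g) yh
    have h4 := split_card I (fun g => if g ∈ I then y else f g) y
    rw [hI, hout] at h3; rw [hI2, hout2] at h4
    simp only [Finset.card_empty, Nat.zero_add] at h3 h4
    beta_reduce at h3 h4
    have hcy : (I.filter (fun g => f g = y)).card ≤ I.card := card_filter_le _ _
    by_cases hyy : y < yh
    · rw [if_pos hyy] at hlt
      have hle : (univ.filter (fun g => (if g ∈ I then y else f g) = yh)).card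
          ≤ (univ.filter (fun g => (if g ∈ I then y else f g) = y)).card := by omega
      rcases hle.lt_or_eq with h | h
      · exact Or.inl h
      · exact Or.inr ⟨h.symm, hyy⟩
    · rw [if_neg hyy] at hlt
      refine Or.inl ?_
      beta_reduce
      omega
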